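/- Let β > 0, γ > 1, α > 1, A ≥ 0, ε ≥ 0, and let ω : [0, ∞) → [0, ∞) be continuous and satisfy, for every t ≥ 0, ω(t) ≤ A ∫_0^t e^{−β(t−s)} (1+s)^{−γ} ds + ε ∫_0^t e^{−β(t−s)} (1+s)^{−α} ω(s) ds. Then there is a constant C depending only on β, γ, α, ε (and bounded uniformly for ε in a bounded set) such that ω(t) ≤ C A (1+t)^{−γ} for all t ≥ 0. -/

import Mathlib

open MeasureTheory Set intervalIntegral

lemma aux_exp_dom (c γ : ℝ) (hc : 0 < c) :
    ∃ Ce > (0:ℝ), ∀ t ≥ (0:ℝ), (1 + t) ^ γ ≤ Ce * Real.exp (c * t) := by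
  obtain ⟨n, hn⟩ := exists_nat_ge γ
  refine ⟨2 ^ n * (1 + n.factorial / c ^ n), by positivity, fun t ht => ?_⟩
  have h1t : (1:ℝ) ≤ 1 + t := by linarith
  have h1 : (1 + t) ^ γ ≤ (1 + t) ^ (n:ℝ) := Real.rpow_le_rpow_of_exponent_le h1t hn
  rw [Real.rpow_natCast] at h1
  have hm : 1 + t ≤ 2 * max 1 t := by
    rcases le_total t 1 with h | h
    · rw [max_eq_left h]; linarith
    · rw [max_eq_right h]; linarith
  have h2 : (1 + t) ^ n ≤ 2 ^ n * (1 + t ^ n) := by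
    calc (1 + t) ^ n ≤ (2 * max 1 t) ^ n := pow_le_pow_left₀ (by linarith) hm n
      _ = 2 ^ n * max 1 t ^ n := mul_pow 2 _ n
      _ ≤ 2 ^ n * (1 + t ^ n) := by
          gcongr
          rcases le_total t 1 with h | h
          · rw [max_eq_left h, one_pow]
            nlinarith [pow_nonneg ht n]
          · rw [max_eq_right h]
            linarith
  have h3 : t ^ n ≤ n.factorial / c ^ n * Real.exp (c * t) := by
    have key := Real.pow_div_factorial_le_exp (x := c * t) (by positivity) n
    rw [mul_pow, div_le_iff₀ (by positivity : (0:ℝ) < (n.factorial:ℝ))] at key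
    rw [div_mul_eq_mul_div, le_div_iff₀ (by positivity : (0:ℝ) < c ^ n)]
    nlinarith [key]
  have hexp : (1:ℝ) ≤ Real.exp (c * t) := Real.one_le_exp (by positivity)
  calc (1 + t) ^ γ ≤ 2 ^ n * (1 + t ^ n) := h1.trans h2
    _ ≤ 2 ^ n * (Real.exp (c * t) + n.factorial / c ^ n * Real.exp (c * t)) := by
        gcongr
    _ = 2 ^ n * (1 + n.factorial / c ^ n) * Real.exp (c * t) := by ring

lemma aux_deriv_rpow (δ : ℝ) {s : ℝ} (hs0 : 0 ≤ s) :
    HasDerivAt (fun x => (1 + x) ^ (1 - δ) / (1 - δ)) ((1 + s) ^ (-δ)) s ∨ δ = 1 := by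
  by_cases hδ1 : δ = 1
  · exact Or.inr hδ1
  left
  have hb : (0:ℝ) < 1 + s := by linarith
  have h1 : HasDerivAt (fun x : ℝ => 1 + x) 1 s := by
    simpa using (hasDerivAt_id s).const_add 1
  have h2 : HasDerivAt (fun x => (1 + x) ^ (1 - δ))
      ((1 - δ) * (1 + s) ^ (1 - δ - 1) * 1) s :=
    (Real.hasDerivAt_rpow_const (Or.inl hb.ne')).comp s h1
  have h3 := h2.div_const (1 - δ)
  have hδ' : (1:ℝ) - δ ≠ 0 := by
    intro h; apply hδ1; linarith
  refine h3.congr_deriv ?_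
  rw [show (1 - δ - 1) = -δ by ring]
  field_simp

lemma aux_cont_rpow (δ : ℝ) {a b : ℝ} (ha : 0 ≤ a) :
    ContinuousOn (fun s : ℝ => (1 + s) ^ δ) (Icc a b) := by
  apply ContinuousOn.rpow_const
  · fun_prop
  · intro s hs
    have : (0:ℝ) < 1 + s := by have := hs.1; linarith
    exact Or.inl this.ne'

lemma aux_int_rpow_eq (δ : ℝ) (hδ : δ ≠ 1) {t : ℝ} (ht : 0 ≤ t) :
    ∫ s in (0:ℝ)..t, (1 + s) ^ (-δ) = ((1 + t) ^ (1 - δ) - 1) / (1 - δ) := by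
  have hD : ∀ s ∈ uIcc (0:ℝ) t, HasDerivAt (fun x => (1 + x) ^ (1 - δ) / (1 - δ))
      ((1 + s) ^ (-δ)) s := by
    rw [uIcc_of_le ht]
    intro s hs
    rcases aux_deriv_rpow δ hs.1 with h | h
    · exact h
    · exact absurd h hδ
  have hInt : IntervalIntegrable (fun s : ℝ => (1 + s) ^ (-δ)) volume 0 t := by
    apply ContinuousOn.intervalIntegrable
    rw [uIcc_of_le ht]
    exact aux_cont_rpow (-δ) le_rfl
  rw [intervalIntegral.integral_eq_sub_of_hasDerivAt hD hInt]
  norm_num; ring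

lemma aux_int_rpow (δ : ℝ) (hδ : 1 < δ) {t : ℝ} (ht : 0 ≤ t) :
    ∫ s in (0:ℝ)..t, (1 + s) ^ (-δ) ≤ 1 / (δ - 1) := by
  rw [aux_int_rpow_eq δ (by linarith) ht]
  have hx : 0 ≤ (1 + t) ^ (1 - δ) := Real.rpow_nonneg (by linarith) _
  rw [div_le_iff_of_neg (by linarith : 1 - δ < 0)]
  have h : 1 / (δ - 1) * (1 - δ) = -1 := by
    rw [div_mul_eq_mul_div, div_eq_iff (by linarith : δ - 1 ≠ 0)]; ring
  linarith

lemma gronwall_const (T a : ℝ) (hT : 0 ≤ T) (b u : ℝ → ℝ)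
    (hb : ContinuousOn b (Icc 0 T)) (hbnn : ∀ s ∈ Icc (0:ℝ) T, 0 ≤ b s)
    (hu : ContinuousOn u (Icc 0 T))
    (h : ∀ t ∈ Icc (0:ℝ) T, u t ≤ a + ∫ s in (0:ℝ)..t, b s * u s) :
    u T ≤ a * Real.exp (∫ s in (0:ℝ)..T, b s) := by
  rcases eq_or_lt_of_le hT with rfl | hT'
  · simpa using h 0 (by simp)
  have hbu : ContinuousOn (fun s => b s * u s) (Icc 0 T) := hb.mul hu
  set V : ℝ → ℝ := fun t => a + ∫ s in (0:ℝ)..t, b s * u s with hV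
  set E : ℝ → ℝ := fun t => ∫ s in (0:ℝ)..t, b s with hE
  set G : ℝ → ℝ := fun t => V t * Real.exp (-E t) with hG
  have hVc : ContinuousOn V (Icc 0 T) := by
    apply continuousOn_const.add
    have := intervalIntegral.continuousOn_primitive_interval
      (μ := volume) (a := (0:ℝ)) (b := T) (f := fun s => b s * u s)
      (by rw [uIcc_of_le hT]; exact hbu.integrableOn_compact isCompact_Icc)
    rwa [uIcc_of_le hT] at this
  have hEc : ContinuousOn E (Icc 0 T) := by
    have := intervalIntegral.continuousOn_primitive_interval
      (μ := volume) (a := (0:ℝ)) (b := T) (f := b)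
      (by rw [uIcc_of_le hT]; exact hb.integrableOn_compact isCompact_Icc)
    rwa [uIcc_of_le hT] at this
  have hGc : ContinuousOn G (Icc 0 T) := hVc.mul (hEc.neg.rexp)
  have hderiv : ∀ t ∈ Ioo (0:ℝ) T,
      HasDerivAt G ((b t * u t - b t * V t) * Real.exp (-E t)) t := by
    intro t ht
    have htmem : Icc 0 T ∈ nhds t := Icc_mem_nhds ht.1 ht.2
    have hIo : IsOpen (Ioo (0:ℝ) T) := isOpen_Ioo
    have hbuO : ContinuousOn (fun s => b s * u s) (Ioo 0 T) := hbu.mono Ioo_subset_Icc_self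
    have hbO : ContinuousOn b (Ioo 0 T) := hb.mono Ioo_subset_Icc_self
    have hVd : HasDerivAt V (b t * u t) t := by
      apply HasDerivAt.const_add
      exact intervalIntegral.integral_hasDerivAt_right
        ((hbu.mono (by rw [uIcc_of_le ht.1.le]; exact Icc_subset_Icc le_rfl ht.2.le)).intervalIntegrable)
        (hbuO.stronglyMeasurableAtFilter hIo t ht)
        ((hbu.continuousAt htmem))
    have hEd : HasDerivAt E (b t) t :=
      intervalIntegral.integral_hasDerivAt_right
        ((hb.mono (by rw [uIcc_of_le ht.1.le]; exact Icc_subset_Icc le_rfl ht.2.le)).intervalIntegrable)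
        (hbO.stronglyMeasurableAtFilter hIo t ht)
        ((hb.continuousAt htmem))
    have hexpd : HasDerivAt (fun t => Real.exp (-E t)) (-b t * Real.exp (-E t)) t := by
      have := (hEd.neg).exp
      simpa [mul_comm] using this
    have := hVd.mul hexpd
    refine this.congr_deriv ?_
    ring
  have hanti : AntitoneOn G (Icc 0 T) := by
    apply antitoneOn_of_deriv_nonpos (convex_Icc 0 T) hGc
    · intro t ht
      rw [interior_Icc] at ht
      exact ((hderiv t ht).differentiableAt).differentiableWithinAt
    · intro t ht
      rw [interior_Icc] at ht
      rw [(hderiv t ht).deriv]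
      have huV : u t ≤ V t := h t (Ioo_subset_Icc_self ht)
      have hbt : 0 ≤ b t := hbnn t (Ioo_subset_Icc_self ht)
      have : b t * u t - b t * V t ≤ 0 := by nlinarith
      exact mul_nonpos_of_nonpos_of_nonneg this (Real.exp_nonneg _)
  have hG0 : G 0 = a := by simp [hG, hV, hE]
  have hGT : G T ≤ a := by
    rw [← hG0]
    exact hanti (by simp [hT]) (by simp [hT]) hT
  have hVT : V T ≤ a * Real.exp (E T) := by
    have h2 : V T * Real.exp (-E T) ≤ a := hGT
    calc V T = V T * Real.exp (-E T) * Real.exp (E T) := by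
          rw [mul_assoc, ← Real.exp_add]; simp
      _ ≤ a * Real.exp (E T) :=
          mul_le_mul_of_nonneg_right h2 (Real.exp_nonneg _)
  calc u T ≤ V T := h T (by simp [hT])
    _ ≤ a * Real.exp (E T) := hVT

lemma aux_cont_f (β γ t a b : ℝ) (ha : 0 ≤ a) :
    ContinuousOn (fun s : ℝ => Real.exp (-β * (t - s)) * (1 + s) ^ (-γ)) (Icc a b) := by
  apply ContinuousOn.mul _ (aux_cont_rpow (-γ) ha)
  fun_prop

lemma aux_exp_integral (β t c d : ℝ) (hβ : 0 < β) :
    ∫ s in c..d, Real.exp (-β * (t - s)) = (Real.exp (-β*(t-d)) - Real.exp (-β*(t-c))) / β := by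
  have hD : ∀ s ∈ uIcc c d, HasDerivAt (fun x => Real.exp (-β * (t - x)) / β)
      (Real.exp (-β * (t - s))) s := by
    intro s _
    have h1 : HasDerivAt (fun x : ℝ => -β * (t - x)) β s := by
      have := ((hasDerivAt_id s).const_sub t).const_mul (-β)
      simpa using this
    have := h1.exp.div_const β
    refine this.congr_deriv ?_
    field_simp
  rw [intervalIntegral.integral_eq_sub_of_hasDerivAt hD]
  · ring
  · apply ContinuousOn.intervalIntegrable; fun_prop

lemma conv_bound (β γ : ℝ) (hβ : 0 < β) (hγ : 1 < γ) :
    ∃ C2 > (0:ℝ), ∀ t ≥ (0:ℝ),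
      (∫ s in (0:ℝ)..t, Real.exp (-β * (t - s)) * (1 + s) ^ (-γ)) ≤ C2 * (1 + t) ^ (-γ) := by
  obtain ⟨Ce, hCe0, hCe⟩ := aux_exp_dom (β/2) γ (by linarith)
  have h2γ : (0:ℝ) < (2:ℝ) ^ γ := Real.rpow_pos_of_pos (by norm_num) γ
  have hγ1 : (0:ℝ) < γ - 1 := by linarith
  refine ⟨Ce / (γ - 1) + 2 ^ γ / β, by positivity, fun t ht => ?_⟩
  have h1t : (0:ℝ) < 1 + t := by linarith
  have ht2 : (0:ℝ) ≤ t / 2 := by linarith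
  have ht2t : t / 2 ≤ t := by linarith
  have hIab : ∀ a b : ℝ, 0 ≤ a → a ≤ b →
      IntervalIntegrable (fun s => Real.exp (-β * (t - s)) * (1 + s) ^ (-γ)) volume a b := by
    intro a b ha0 hab
    apply ContinuousOn.intervalIntegrable
    rw [uIcc_of_le hab]; exact aux_cont_f β γ t a b ha0
  have hsplit := intervalIntegral.integral_add_adjacent_intervals
    (hIab 0 (t/2) le_rfl ht2) (hIab (t/2) t ht2 ht2t)
  -- part 1
  have hexple : Real.exp (-(β / 2 * t)) ≤ Ce * (1 + t) ^ (-γ) := by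
    have hCt := hCe t ht
    have hb : (0:ℝ) < (1 + t) ^ γ := Real.rpow_pos_of_pos h1t γ
    have ha : (0:ℝ) < Real.exp (β / 2 * t) := Real.exp_pos _
    have hdd : (1:ℝ) / Real.exp (β / 2 * t) ≤ Ce / ((1 + t) ^ γ) := by
      rw [div_le_div_iff₀ ha hb]
      nlinarith [hCt]
    rw [Real.exp_neg, Real.rpow_neg h1t.le]
    simpa [one_div, div_eq_mul_inv] using hdd
  have hp1 : (∫ s in (0:ℝ)..t/2, Real.exp (-β * (t - s)) * (1 + s) ^ (-γ))
      ≤ Ce / (γ - 1) * (1 + t) ^ (-γ) := by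
    have hmono : (∫ s in (0:ℝ)..t/2, Real.exp (-β * (t - s)) * (1 + s) ^ (-γ))
        ≤ ∫ s in (0:ℝ)..t/2, Real.exp (-(β / 2 * t)) * (1 + s) ^ (-γ) := by
      apply intervalIntegral.integral_mono_on ht2 (hIab 0 (t/2) le_rfl ht2)
      · apply ContinuousOn.intervalIntegrable
        rw [uIcc_of_le ht2]
        exact continuousOn_const.mul (aux_cont_rpow (-γ) le_rfl)
      · intro s hs
        apply mul_le_mul_of_nonneg_right _ (Real.rpow_nonneg (by linarith [hs.1]) _)
        apply Real.exp_le_exp.mpr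
        nlinarith [hs.2]
    rw [intervalIntegral.integral_const_mul] at hmono
    have hintnn : (0:ℝ) ≤ ∫ s in (0:ℝ)..t/2, (1 + s) ^ (-γ) := by
      apply intervalIntegral.integral_nonneg ht2
      intro s hs
      exact Real.rpow_nonneg (by linarith [hs.1]) _
    calc (∫ s in (0:ℝ)..t/2, Real.exp (-β * (t - s)) * (1 + s) ^ (-γ))
        ≤ Real.exp (-(β / 2 * t)) * ∫ s in (0:ℝ)..t/2, (1 + s) ^ (-γ) := hmono
      _ ≤ (Ce * (1 + t) ^ (-γ)) * (1 / (γ - 1)) := by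
          apply mul_le_mul hexple (aux_int_rpow γ hγ ht2) hintnn
          positivity
      _ = Ce / (γ - 1) * (1 + t) ^ (-γ) := by ring
  -- part 2
  have hrpt : ((1 + t) / 2) ^ (-γ) = (1 + t) ^ (-γ) * 2 ^ γ := by
    rw [Real.div_rpow h1t.le (by norm_num : (0:ℝ) ≤ 2), Real.rpow_neg (by norm_num : (0:ℝ) ≤ 2),
      div_eq_mul_inv, inv_inv]
  have hp2 : (∫ s in (t/2)..t, Real.exp (-β * (t - s)) * (1 + s) ^ (-γ))
      ≤ 2 ^ γ / β * (1 + t) ^ (-γ) := by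
    have hmono : (∫ s in (t/2)..t, Real.exp (-β * (t - s)) * (1 + s) ^ (-γ))
        ≤ ∫ s in (t/2)..t, Real.exp (-β * (t - s)) * (2 ^ γ * (1 + t) ^ (-γ)) := by
      apply intervalIntegral.integral_mono_on ht2t (hIab (t/2) t ht2 ht2t)
      · apply ContinuousOn.intervalIntegrable
        apply ContinuousOn.mul _ continuousOn_const
        fun_prop
      · intro s hs
        apply mul_le_mul_of_nonneg_left _ (Real.exp_nonneg _)
        calc (1 + s) ^ (-γ) ≤ ((1 + t) / 2) ^ (-γ) := by
              apply Real.rpow_le_rpow_of_nonpos (by linarith) (by linarith [hs.1]) (by linarith)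
          _ = (1 + t) ^ (-γ) * 2 ^ γ := hrpt
          _ = 2 ^ γ * (1 + t) ^ (-γ) := mul_comm _ _
    rw [intervalIntegral.integral_mul_const, aux_exp_integral β t (t/2) t hβ] at hmono
    have hnum : Real.exp (-β * (t - t)) - Real.exp (-β * (t - t / 2)) ≤ 1 := by
      simp only [sub_self, mul_zero, Real.exp_zero]
      linarith [Real.exp_nonneg (-β * (t - t / 2))]
    have hexp2 : (Real.exp (-β * (t - t)) - Real.exp (-β * (t - t / 2))) / β ≤ 1 / β := by
      gcongr
    calc (∫ s in (t/2)..t, Real.exp (-β * (t - s)) * (1 + s) ^ (-γ))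
        ≤ (Real.exp (-β * (t - t)) - Real.exp (-β * (t - t / 2))) / β
            * (2 ^ γ * (1 + t) ^ (-γ)) := hmono
      _ ≤ 1 / β * (2 ^ γ * (1 + t) ^ (-γ)) := by
          apply mul_le_mul_of_nonneg_right hexp2
          positivity
      _ = 2 ^ γ / β * (1 + t) ^ (-γ) := by ring
  rw [← hsplit, add_mul]
  exact add_le_add hp1 hp2

lemma aux_shift (β t : ℝ) (g : ℝ → ℝ) :
    Real.exp (β * t) * ∫ s in (0:ℝ)..t, Real.exp (-β * (t - s)) * g s
      = ∫ s in (0:ℝ)..t, Real.exp (β * s) * g s := by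
  rw [← intervalIntegral.integral_const_mul]
  apply intervalIntegral.integral_congr
  intro s _
  simp only
  rw [← mul_assoc, ← Real.exp_add]
  congr 2
  ring

theorem gronwall_damped_decay
    (β γ α ε : ℝ) (hβ : 0 < β) (hγ : 1 < γ) (hα : 1 < α) (hε : 0 ≤ ε) :
    ∃ C > (0:ℝ), ∀ A : ℝ, 0 ≤ A → ∀ w : ℝ → ℝ,
      ContinuousOn w (Set.Ici 0) → (∀ t ≥ (0:ℝ), 0 ≤ w t) →
      (∀ t ≥ (0:ℝ),
        w t ≤ A * (∫ s in (0:ℝ)..t, Real.exp (-β * (t - s)) * (1 + s) ^ (-γ))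
              + ε * ∫ s in (0:ℝ)..t, Real.exp (-β * (t - s)) * ((1 + s) ^ (-α) * w s)) →
      ∀ t ≥ (0:ℝ), w t ≤ C * A * (1 + t) ^ (-γ) := by
  obtain ⟨C2, hC20, hC2⟩ := conv_bound β γ hβ hγ
  set M : ℝ := Real.exp (ε * (1 / (α - 1))) with hM
  have hM0 : 0 < M := Real.exp_pos _
  refine ⟨M * C2, by positivity, fun A hA w hw hwnn hineq t ht => ?_⟩
  -- notation
  set b : ℝ → ℝ := fun s => ε * (1 + s) ^ (-α) with hbdef
  set u : ℝ → ℝ := fun s => Real.exp (β * s) * w s with hudef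
  set Jγ : ℝ → ℝ := fun x => ∫ s in (0:ℝ)..x, Real.exp (β * s) * (1 + s) ^ (-γ) with hJdef
  have hJnn : ∀ x : ℝ, 0 ≤ x → 0 ≤ Jγ x := by
    intro x hx
    apply intervalIntegral.integral_nonneg hx
    intro s hs
    exact mul_nonneg (Real.exp_nonneg _) (Real.rpow_nonneg (by linarith [hs.1]) _)
  have hb_cont : ContinuousOn b (Icc 0 t) := continuousOn_const.mul (aux_cont_rpow (-α) le_rfl)
  have hbnn : ∀ s ∈ Icc (0:ℝ) t, 0 ≤ b s := by
    intro s hs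
    exact mul_nonneg hε (Real.rpow_nonneg (by linarith [hs.1]) _)
  have hu_cont : ContinuousOn u (Icc 0 t) := by
    apply ContinuousOn.mul
    · fun_prop
    · exact hw.mono (Icc_subset_Ici_self)
  have hmain : ∀ x ∈ Icc (0:ℝ) t, u x ≤ A * Jγ t + ∫ s in (0:ℝ)..x, b s * u s := by
    intro x hx
    have h1 := hineq x hx.1
    have h2 : u x ≤ Real.exp (β * x) *
        (A * (∫ s in (0:ℝ)..x, Real.exp (-β * (x - s)) * (1 + s) ^ (-γ))
          + ε * ∫ s in (0:ℝ)..x, Real.exp (-β * (x - s)) * ((1 + s) ^ (-α) * w s)) := by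
      exact mul_le_mul_of_nonneg_left h1 (Real.exp_nonneg _)
    rw [mul_add, mul_left_comm, mul_left_comm (Real.exp (β * x)) ε,
      aux_shift β x (fun s => (1 + s) ^ (-γ)),
      aux_shift β x (fun s => (1 + s) ^ (-α) * w s)] at h2
    have e2 : ε * ∫ s in (0:ℝ)..x, Real.exp (β * s) * ((1 + s) ^ (-α) * w s)
        = ∫ s in (0:ℝ)..x, b s * u s := by
      rw [← intervalIntegral.integral_const_mul]
      apply intervalIntegral.integral_congr
      intro s _
      simp only [hbdef, hudef]
      ring
    rw [e2] at h2
    refine h2.trans (add_le_add ?_ le_rfl)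
    apply mul_le_mul_of_nonneg_left _ hA
    apply intervalIntegral.integral_mono_interval le_rfl hx.1 hx.2
    · filter_upwards [ae_restrict_mem measurableSet_Ioc] with s hs
      exact mul_nonneg (Real.exp_nonneg _) (Real.rpow_nonneg (by linarith [hs.1]) _)
    · apply ContinuousOn.intervalIntegrable
      rw [uIcc_of_le ht]
      exact (Real.continuous_exp.comp (continuous_const.mul continuous_id)).continuousOn.mul
        (aux_cont_rpow (-γ) le_rfl)
  have grw := gronwall_const t (A * Jγ t) ht b u hb_cont hbnn hu_cont hmain
  have hEb : (∫ s in (0:ℝ)..t, b s) ≤ ε * (1 / (α - 1)) := by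
    simp only [hbdef]
    rw [intervalIntegral.integral_const_mul]
    exact mul_le_mul_of_nonneg_left (aux_int_rpow α hα ht) hε
  have h3 : u t ≤ A * Jγ t * M :=
    grw.trans (mul_le_mul_of_nonneg_left (Real.exp_le_exp.mpr hEb)
      (mul_nonneg hA (hJnn t ht)))
  have h4 : w t = Real.exp (-(β * t)) * u t := by
    simp only [hudef]
    rw [← mul_assoc, ← Real.exp_add]
    simp
  have h5 : Real.exp (-(β * t)) * Jγ t
      = ∫ s in (0:ℝ)..t, Real.exp (-β * (t - s)) * (1 + s) ^ (-γ) := by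
    rw [hJdef]
    simp only
    rw [← aux_shift β t (fun s => (1 + s) ^ (-γ)), ← mul_assoc, ← Real.exp_add]
    simp
  calc w t = Real.exp (-(β * t)) * u t := h4
    _ ≤ Real.exp (-(β * t)) * (A * Jγ t * M) :=
        mul_le_mul_of_nonneg_left h3 (Real.exp_nonneg _)
    _ = A * M * (Real.exp (-(β * t)) * Jγ t) := by ring
    _ = A * M * ∫ s in (0:ℝ)..t, Real.exp (-β * (t - s)) * (1 + s) ^ (-γ) := by rw [h5]
    _ ≤ A * M * (C2 * (1 + t) ^ (-γ)) := by
        apply mul_le_mul_of_nonneg_left (hC2 t ht)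
        positivity
    _ = M * C2 * A * (1 + t) ^ (-γ) := by ring
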